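/- arXiv:1702.04002 — 2 statements merged into one kernel-verified Lean document; each statement's English description precedes it below -/
import Mathlib

section
/- Let X be a finite-dimensional real vector space and q an asymmetric norm on X. If q is 1-bounded, then the closed unit ball B_1^q[0] is strongly compact, and consequently X with the topology τ_q is strongly locally compact. -/
open Pointwise Set

/-- An asymmetric norm on a real vector space `X`. -/
structure IsAsymmetricNorm {X : Type*} [AddCommGroup X] [Module ℝ X] (q : X → ℝ) : Prop where
  nonneg : ∀ x, 0 ≤ q x
  smul_eq : ∀ a : ℝ, 0 ≤ a → ∀ x, q (a • x) = a * q x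
  add_le : ∀ x y, q (x + y) ≤ q x + q y
  eq_zero : ∀ x, q x = 0 → q (-x) = 0 → x = 0

/-- The topology `τ_q` generated by the open balls of `q`. -/
def asymTop {X : Type*} [AddCommGroup X] [Module ℝ X] (q : X → ℝ) : TopologicalSpace X :=
  TopologicalSpace.generateFrom {U | ∃ x : X, ∃ ε : ℝ, 0 < ε ∧ U = {y | q (y - x) < ε}}

/-- The symmetrization `q^s` of `q`. -/
def symNorm {X : Type*} [AddCommGroup X] (q : X → ℝ) (x : X) : ℝ := max (q x) (q (-x))

/-- The cone `θ_q = {x : q x = 0}`. -/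
def theta {X : Type*} [AddCommGroup X] (q : X → ℝ) : Set X := {x | q x = 0}

/-- The closed ball `B_r^q[x] = {y : q (y - x) ≤ r}`. -/
def closedBallA {X : Type*} [AddCommGroup X] (q : X → ℝ) (x : X) (r : ℝ) : Set X :=
  {y | q (y - x) ≤ r}

/-- A set `K` is strongly compact (w.r.t. the asymmetric norm `q`) if there is a set `S`,
compact in the topology of the norm `q^s`, with `S ⊆ K ⊆ S + θ_q`. -/
def StronglyCompact {X : Type*} [AddCommGroup X] [Module ℝ X] (q : X → ℝ) (K : Set X) : Prop :=
  ∃ S : Set X, @IsCompact X (asymTop (symNorm q)) S ∧ S ⊆ K ∧ K ⊆ S + theta q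

/-- `q` is right bounded if `r • B_1^q[0] ⊆ B_1^{q^s}[0] + θ_q` for some `r > 0`. -/
def RightBounded {X : Type*} [AddCommGroup X] [Module ℝ X] (q : X → ℝ) : Prop :=
  ∃ r : ℝ, 0 < r ∧ r • closedBallA q 0 1 ⊆ closedBallA (symNorm q) 0 1 + theta q

/-- `q` is 1-bounded if `B_1^q[0] ⊆ B_1^{q^s}[0] + θ_q`. -/
def OneBounded {X : Type*} [AddCommGroup X] [Module ℝ X] (q : X → ℝ) : Prop :=
  closedBallA q 0 1 ⊆ closedBallA (symNorm q) 0 1 + theta q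

/-- Two asymmetric norms are equivalent if `κ·q ≤ p ≤ l·q` for some `κ, l > 0`. -/
def EquivNorms {X : Type*} [AddCommGroup X] (p q : X → ℝ) : Prop :=
  ∃ κ l : ℝ, 0 < κ ∧ 0 < l ∧ ∀ x, κ * q x ≤ p x ∧ p x ≤ l * q x

/-- `X` is strongly locally compact (w.r.t. `τ_q`) if every point has a local base of
strongly compact sets. -/
def StronglyLocallyCompact {X : Type*} [AddCommGroup X] [Module ℝ X] (q : X → ℝ) : Prop :=
  ∀ x : X, ∀ U ∈ @nhds X (asymTop q) x,
    ∃ K : Set X, StronglyCompact q K ∧ K ∈ @nhds X (asymTop q) x ∧ K ⊆ U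

section Aux

variable {X : Type*} [AddCommGroup X] [Module ℝ X] {q : X → ℝ}

lemma IsAsymmetricNorm.q_zero (hq : IsAsymmetricNorm q) : q 0 = 0 := by
  have := hq.smul_eq 0 le_rfl 0
  simpa using this

lemma symNorm_smul (hq : IsAsymmetricNorm q) (a : ℝ) (x : X) :
    symNorm q (a • x) = |a| * symNorm q x := by
  rcases le_total 0 a with h | h
  · unfold symNorm
    rw [← smul_neg, hq.smul_eq a h, hq.smul_eq a h, abs_of_nonneg h,
      mul_max_of_nonneg _ _ h]
  · have h' : 0 ≤ -a := neg_nonneg.2 h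
    unfold symNorm
    have e1 : a • x = (-a) • (-x) := by rw [neg_smul_neg]
    have e2 : -(a • x) = (-a) • x := (neg_smul a x).symm
    have e3 : q (a • x) = (-a) * q (-x) := by rw [e1, hq.smul_eq _ h']
    have e4 : q (-(a • x)) = (-a) * q x := by rw [e2, hq.smul_eq _ h']
    rw [e3, e4, abs_of_nonpos h, mul_max_of_nonneg _ _ h', max_comm]

/-- The symmetrization as an `AddGroupNorm`. -/
noncomputable def agn (q : X → ℝ) (hq : IsAsymmetricNorm q) : AddGroupNorm X where
  toFun := symNorm q
  map_zero' := by simp [symNorm, hq.q_zero]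
  add_le' := fun x y => by
    have h1 := hq.add_le x y
    have h2 := hq.add_le (-x) (-y)
    rw [← neg_add] at h2
    exact max_le (h1.trans (add_le_add (le_max_left _ _) (le_max_left _ _)))
      (h2.trans (add_le_add (le_max_right _ _) (le_max_right _ _)))
  neg' := fun x => by simp [symNorm, max_comm]
  eq_zero_of_map_eq_zero' := fun x h => by
    have h1 : q x = 0 := le_antisymm (h ▸ le_max_left _ _) (hq.nonneg x)
    have h2 : q (-x) = 0 := le_antisymm (h ▸ le_max_right _ _) (hq.nonneg (-x))
    exact hq.eq_zero x h1 h2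

lemma generateFrom_balls_eq {Y : Type*} [NormedAddCommGroup Y] :
    TopologicalSpace.generateFrom {U : Set Y | ∃ x : Y, ∃ ε : ℝ, 0 < ε ∧ U = {y | ‖y - x‖ < ε}} =
      (inferInstance : TopologicalSpace Y) := by
  have hset : {U : Set Y | ∃ x : Y, ∃ ε : ℝ, 0 < ε ∧ U = {y | ‖y - x‖ < ε}} =
      {U : Set Y | ∃ x : Y, ∃ ε : ℝ, 0 < ε ∧ U = Metric.ball x ε} := by
    apply Set.ext; intro U
    constructor
    · rintro ⟨x, ε, hε, rfl⟩
      exact ⟨x, ε, hε, by ext y; simp [Metric.mem_ball, dist_eq_norm]⟩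
    · rintro ⟨x, ε, hε, rfl⟩
      exact ⟨x, ε, hε, by ext y; simp [Metric.mem_ball, dist_eq_norm]⟩
  rw [hset]
  have hb : TopologicalSpace.IsTopologicalBasis
      {U : Set Y | ∃ x : Y, ∃ ε : ℝ, 0 < ε ∧ U = Metric.ball x ε} := by
    refine TopologicalSpace.isTopologicalBasis_of_isOpen_of_nhds ?_ ?_
    · rintro u ⟨x, ε, hε, rfl⟩; exact Metric.isOpen_ball
    · intro a u ha hu
      obtain ⟨ε, hε, hb⟩ := Metric.isOpen_iff.1 hu a ha
      exact ⟨Metric.ball a ε, ⟨a, ε, hε, rfl⟩, Metric.mem_ball_self hε, hb⟩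
  exact hb.eq_generateFrom.symm

lemma qball_mem_nhds (hq : IsAsymmetricNorm q) (x : X) {ε : ℝ} (hε : 0 < ε) :
    {y | q (y - x) < ε} ∈ @nhds X (asymTop q) x := by
  letI := asymTop q
  have hopen : IsOpen {y | q (y - x) < ε} :=
    TopologicalSpace.isOpen_generateFrom_of_mem ⟨x, ε, hε, rfl⟩
  exact hopen.mem_nhds (by simp [hq.q_zero, hε])

lemma exists_qball_subset (hq : IsAsymmetricNorm q) {x : X} {U : Set X}
    (hU : U ∈ @nhds X (asymTop q) x) : ∃ ε > 0, {y | q (y - x) < ε} ⊆ U := by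
  letI := asymTop q
  obtain ⟨V, hVU, hV, hxV⟩ := mem_nhds_iff.1 hU
  have key : ∀ W : Set X, TopologicalSpace.GenerateOpen
      {U : Set X | ∃ c : X, ∃ ε : ℝ, 0 < ε ∧ U = {y | q (y - c) < ε}} W →
      x ∈ W → ∃ ε > 0, {y | q (y - x) < ε} ⊆ W := by
    intro W hW
    induction hW with
    | basic s hs =>
      obtain ⟨c, δ, hδ, rfl⟩ := hs
      intro hx
      have hx' : q (x - c) < δ := hx
      refine ⟨δ - q (x - c), sub_pos.2 hx', fun y hy => ?_⟩
      have htri := hq.add_le (y - x) (x - c)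
      rw [sub_add_sub_cancel] at htri
      have hy' : q (y - x) < δ - q (x - c) := hy
      show q (y - c) < δ
      linarith
    | univ => exact fun _ => ⟨1, one_pos, fun _ _ => trivial⟩
    | inter s t _ _ ihs iht =>
      intro hx
      obtain ⟨ε1, hε1, hs1⟩ := ihs hx.1
      obtain ⟨ε2, hε2, hs2⟩ := iht hx.2
      refine ⟨min ε1 ε2, lt_min hε1 hε2, fun y hy => ?_⟩
      have hy' : q (y - x) < min ε1 ε2 := hy
      exact ⟨hs1 (show q (y - x) < ε1 from lt_of_lt_of_le hy' (min_le_left _ _)),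
        hs2 (show q (y - x) < ε2 from lt_of_lt_of_le hy' (min_le_right _ _))⟩
    | sUnion S _ ih =>
      intro hx
      obtain ⟨s, hsS, hxs⟩ := hx
      obtain ⟨ε, hε, h⟩ := ih s hsS hxs
      exact ⟨ε, hε, h.trans (Set.subset_sUnion_of_mem hsS)⟩
  obtain ⟨ε, hε, h⟩ := key V hV hxV
  exact ⟨ε, hε, h.trans hVU⟩

end Aux

theorem statement11 {X : Type*} [AddCommGroup X] [Module ℝ X] [FiniteDimensional ℝ X]
    (q : X → ℝ) (hq : IsAsymmetricNorm q) (h1 : OneBounded q) :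
    StronglyCompact q (closedBallA q 0 1) ∧ StronglyLocallyCompact q := by
  letI : NormedAddCommGroup X := (agn q hq).toNormedAddCommGroup
  letI : NormedSpace ℝ X :=
    ⟨fun a x => le_of_eq (symNorm_smul hq a x)⟩
  have hnorm : ∀ y : X, ‖y‖ = symNorm q y := fun y => rfl
  have htop : asymTop (symNorm q) = (inferInstance : TopologicalSpace X) := by
    have := generateFrom_balls_eq (Y := X)
    unfold asymTop
    convert this using 2
    rfl
  have hSeq : Metric.closedBall (0 : X) 1 = closedBallA (symNorm q) 0 1 := by
    ext y
    simp only [Metric.mem_closedBall, dist_eq_norm, closedBallA, Set.mem_setOf_eq, hnorm]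
  have hScompact : @IsCompact X (asymTop (symNorm q)) (closedBallA (symNorm q) 0 1) := by
    rw [htop, ← hSeq]
    exact isCompact_closedBall 0 1
  have hSsub : closedBallA (symNorm q) 0 1 ⊆ closedBallA q 0 1 := by
    intro y hy
    have hy' : symNorm q (y - 0) ≤ 1 := hy
    exact le_trans (le_max_left _ _) hy'
  have hSC : StronglyCompact q (closedBallA q 0 1) :=
    ⟨closedBallA (symNorm q) 0 1, hScompact, hSsub, h1⟩
  refine ⟨hSC, ?_⟩
  intro x U hU
  obtain ⟨ε, hε, hball⟩ := exists_qball_subset hq hU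
  set c : ℝ := ε / 2 with hc
  have hc0 : 0 < c := by positivity
  refine ⟨closedBallA q x c, ?_, ?_, ?_⟩
  · -- strongly compact
    refine ⟨(fun y => x + c • y) '' closedBallA (symNorm q) 0 1, ?_, ?_, ?_⟩
    · rw [htop]
      rw [htop, ← hSeq] at hScompact
      rw [← hSeq]
      exact hScompact.image
        (continuous_const.add (continuous_const_smul c) : Continuous fun y : X => x + c • y)
    · rintro _ ⟨s, hs, rfl⟩
      have hs' : symNorm q (s - 0) ≤ 1 := hs
      rw [sub_zero] at hs'
      show q (x + c • s - x) ≤ c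
      rw [add_sub_cancel_left, hq.smul_eq _ hc0.le]
      calc c * q s ≤ c * 1 := by
            exact mul_le_mul_of_nonneg_left (le_trans (le_max_left _ _) hs') hc0.le
        _ = c := mul_one c
    · intro y hy
      have hy' : q (y - x) ≤ c := hy
      have hz : (c⁻¹ • (y - x)) ∈ closedBallA q 0 1 := by
        show q (c⁻¹ • (y - x) - 0) ≤ 1
        rw [sub_zero, hq.smul_eq _ (inv_nonneg.2 hc0.le)]
        calc c⁻¹ * q (y - x) ≤ c⁻¹ * c :=
              mul_le_mul_of_nonneg_left hy' (inv_nonneg.2 hc0.le)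
          _ = 1 := inv_mul_cancel₀ hc0.ne'
      obtain ⟨s, hs, t, ht, hst⟩ := Set.mem_add.1 (h1 hz)
      refine Set.mem_add.2 ⟨x + c • s, ⟨s, hs, rfl⟩, c • t, ?_, ?_⟩
      · show q (c • t) = 0
        rw [hq.smul_eq _ hc0.le, ht]
        ring
      · have hcz : c • (c⁻¹ • (y - x)) = y - x := by
          rw [smul_smul, mul_inv_cancel₀ hc0.ne', one_smul]
        calc x + c • s + c • t = x + c • (s + t) := by rw [smul_add, add_assoc]
          _ = x + (y - x) := by rw [hst, hcz]
          _ = y := by abel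
  · exact Filter.mem_of_superset (qball_mem_nhds hq x hc0)
      (fun y (hy : q (y - x) < c) => le_of_lt hy)
  · intro y hy
    have hy' : q (y - x) ≤ c := hy
    exact hball (show q (y - x) < ε by rw [hc] at hy'; linarith)
end

section
/- Let X be a finite-dimensional real vector space and let p and p' be two right bounded asymmetric norms on X. Then p and p' are equivalent if and only if θ_p = θ_{p'}. -/
open Pointwise Set

set_option linter.unusedSectionVars false

section aux
variable {X : Type*} [AddCommGroup X] [Module ℝ X]

lemma asym_zero {p : X → ℝ} (hp : IsAsymmetricNorm p) : p 0 = 0 := by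
  have := hp.smul_eq 0 le_rfl 0
  simpa using this

lemma sym_zero {p : X → ℝ} (hp : IsAsymmetricNorm p) : symNorm p 0 = 0 := by
  simp [symNorm, asym_zero hp]

lemma le_sym (p : X → ℝ) (x : X) : p x ≤ symNorm p x := le_max_left _ _

lemma sym_add_le {p : X → ℝ} (hp : IsAsymmetricNorm p) (x y : X) :
    symNorm p (x + y) ≤ symNorm p x + symNorm p y := by
  refine max_le ?_ ?_
  · exact (hp.add_le x y).trans (add_le_add (le_max_left _ _) (le_max_left _ _))
  · have : -(x + y) = -x + -y := by abel
    rw [this]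
    exact (hp.add_le (-x) (-y)).trans (add_le_add (le_max_right _ _) (le_max_right _ _))

lemma sym_neg {p : X → ℝ} (x : X) : symNorm p (-x) = symNorm p x := by
  simp [symNorm, max_comm]

lemma sym_smul {p : X → ℝ} (hp : IsAsymmetricNorm p) (a : ℝ) (x : X) :
    symNorm p (a • x) = |a| * symNorm p x := by
  rcases le_or_gt 0 a with ha | ha
  · have h1 : -(a • x) = a • (-x) := by rw [smul_neg]
    rw [symNorm, symNorm, h1, hp.smul_eq a ha, hp.smul_eq a ha, abs_of_nonneg ha,
      mul_max_of_nonneg _ _ ha]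
  · have ha' : (0:ℝ) ≤ -a := by linarith
    have h1 : a • x = (-a) • (-x) := by rw [neg_smul, smul_neg, neg_neg]
    have h2 : -(a • x) = (-a) • x := by rw [neg_smul]
    have e1 : p (a • x) = (-a) * p (-x) := by rw [h1, hp.smul_eq (-a) ha' (-x)]
    have e2 : p (-(a • x)) = (-a) * p x := by rw [h2, hp.smul_eq (-a) ha' x]
    rw [symNorm, e1, e2, abs_of_neg ha, symNorm, mul_max_of_nonneg _ _ ha']
    exact max_comm _ _

lemma sym_eq_zero {p : X → ℝ} (hp : IsAsymmetricNorm p) {x : X} (h : symNorm p x = 0) :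
    x = 0 := by
  have h1 : p x = 0 := le_antisymm (h ▸ le_max_left _ _) (hp.nonneg x)
  have h2 : p (-x) = 0 := le_antisymm (h ▸ le_max_right _ _) (hp.nonneg (-x))
  exact hp.eq_zero x h1 h2

/-- In finite dimension, `symNorm q ≤ C * symNorm p`. -/
lemma sym_bound [FiniteDimensional ℝ X] (p q : X → ℝ)
    (hp : IsAsymmetricNorm p) (hq : IsAsymmetricNorm q) :
    ∃ C : ℝ, 0 < C ∧ ∀ x, symNorm q x ≤ C * symNorm p x := by
  letI : NormedAddCommGroup X := AddGroupNorm.toNormedAddCommGroup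
    { toFun := symNorm p
      map_zero' := sym_zero hp
      add_le' := sym_add_le hp
      neg' := fun x => sym_neg x
      eq_zero_of_map_eq_zero' := fun x hx => sym_eq_zero hp hx }
  letI : NormedSpace ℝ X := ⟨fun a x => le_of_eq (by
    show symNorm p (a • x) = ‖a‖ * symNorm p x
    rw [Real.norm_eq_abs]; exact sym_smul hp a x)⟩
  have hnorm : ∀ x : X, ‖x‖ = symNorm p x := fun _ => rfl
  set b := Module.finBasis ℝ X with hb
  set f : Fin (Module.finrank ℝ X) → X →L[ℝ] ℝ :=
    fun i => LinearMap.toContinuousLinearMap (b.coord i) with hf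
  set C : ℝ := (∑ i, ‖f i‖ * symNorm q (b i)) + 1 with hC
  have hCpos : 0 < C := by
    have : (0:ℝ) ≤ ∑ i, ‖f i‖ * symNorm q (b i) := by
      apply Finset.sum_nonneg
      intro i _
      exact mul_nonneg (norm_nonneg _) (le_trans (hq.nonneg _) (le_max_left _ _))
    linarith
  refine ⟨C, hCpos, fun x => ?_⟩
  have hrepr : x = ∑ i, b.repr x i • b i := (b.sum_repr x).symm
  calc symNorm q x = symNorm q (∑ i, b.repr x i • b i) := by rw [← hrepr]
    _ ≤ ∑ i, symNorm q (b.repr x i • b i) :=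
        Finset.le_sum_of_subadditive (symNorm q) (sym_zero hq).le (sym_add_le hq) _ _
    _ = ∑ i, |b.repr x i| * symNorm q (b i) := by
        refine Finset.sum_congr rfl fun i _ => ?_
        rw [sym_smul hq]
    _ ≤ ∑ i, (‖f i‖ * ‖x‖) * symNorm q (b i) := by
        refine Finset.sum_le_sum fun i _ => ?_
        refine mul_le_mul_of_nonneg_right ?_
          (le_trans (hq.nonneg _) (le_max_left _ _))
        have := (f i).le_opNorm x
        have hfi : f i x = b.repr x i := rfl
        rwa [hfi, Real.norm_eq_abs] at this
    _ = (∑ i, ‖f i‖ * symNorm q (b i)) * ‖x‖ := by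
        rw [Finset.sum_mul]
        exact Finset.sum_congr rfl fun i _ => by ring
    _ ≤ C * symNorm p x := by
        rw [hnorm x]
        refine mul_le_mul_of_nonneg_right ?_
          (le_trans (hp.nonneg _) (le_max_left _ _))
        simp [hC]

end aux

lemma half_bound {X : Type*} [AddCommGroup X] [Module ℝ X] [FiniteDimensional ℝ X]
    (p q : X → ℝ) (hp : IsAsymmetricNorm p) (hq : IsAsymmetricNorm q)
    (hrb : RightBounded q) (hsub : theta q ⊆ theta p) :
    ∃ l : ℝ, 0 < l ∧ ∀ x, p x ≤ l * q x := by
  obtain ⟨C, hC, hCle⟩ := sym_bound q p hq hp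
  obtain ⟨r, hr, hsubset⟩ := hrb
  refine ⟨C / r, div_pos hC hr, fun x => ?_⟩
  rcases eq_or_lt_of_le (hq.nonneg x) with h0 | h0
  · have hpx : p x = 0 := hsub (show q x = 0 from h0.symm)
    rw [hpx, ← h0, mul_zero]
  · set y := (q x)⁻¹ • x with hy_def
    have hqy : q y = 1 := by
      rw [hy_def, hq.smul_eq _ (inv_nonneg.mpr h0.le) x]
      field_simp
    have hy : y ∈ closedBallA q 0 1 := by
      show q (y - 0) ≤ 1
      rw [sub_zero, hqy]
    have hmem : r • y ∈ r • closedBallA q 0 1 := Set.smul_mem_smul_set hy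
    obtain ⟨c, hc, s, hs, hcs⟩ := Set.mem_add.mp (hsubset hmem)
    have hc1 : symNorm q c ≤ 1 := by simpa [closedBallA] using hc
    have hps : p s = 0 := hsub hs
    have h1 : p (r • y) ≤ C := by
      rw [← hcs]
      calc p (c + s) ≤ p c + p s := hp.add_le c s
        _ = p c := by rw [hps, add_zero]
        _ ≤ symNorm p c := le_sym p c
        _ ≤ C * symNorm q c := hCle c
        _ ≤ C * 1 := mul_le_mul_of_nonneg_left hc1 hC.le
        _ = C := mul_one C
    have h2 : p (r • y) = r * ((q x)⁻¹ * p x) := by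
      rw [hp.smul_eq r hr.le, hy_def, hp.smul_eq _ (inv_nonneg.mpr h0.le)]
    rw [h2] at h1
    have h3 : (q x)⁻¹ * p x ≤ C / r := by
      rw [le_div_iff₀' hr]; exact h1
    have h4 : p x = q x * ((q x)⁻¹ * p x) := by field_simp
    calc p x = q x * ((q x)⁻¹ * p x) := h4
      _ ≤ q x * (C / r) := mul_le_mul_of_nonneg_left h3 h0.le
      _ = C / r * q x := mul_comm _ _

theorem statement15 {X : Type*} [AddCommGroup X] [Module ℝ X] [FiniteDimensional ℝ X]
    (p p' : X → ℝ) (hp : IsAsymmetricNorm p) (hp' : IsAsymmetricNorm p')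
    (hrb : RightBounded p) (hrb' : RightBounded p') :
    EquivNorms p p' ↔ theta p = theta p' := by
  constructor
  · rintro ⟨κ, l, hκ, hl, h⟩
    ext x
    simp only [theta, Set.mem_setOf_eq]
    constructor
    · intro hx
      obtain ⟨h1, h2⟩ := h x
      nlinarith [hp'.nonneg x]
    · intro hx
      obtain ⟨h1, h2⟩ := h x
      nlinarith [hp.nonneg x]
  · intro hth
    obtain ⟨l, hl, hle⟩ := half_bound p p' hp hp' hrb' (by rw [hth])
    obtain ⟨l', hl', hle'⟩ := half_bound p' p hp' hp hrb (by rw [hth])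
    refine ⟨1 / l', l, by positivity, hl, fun x => ⟨?_, hle x⟩⟩
    have h := hle' x
    rw [div_mul_eq_mul_div, one_mul, div_le_iff₀ hl']
    linarith
end
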